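/- Fix N ≥ 2 and target price p* with p*_min ≤ p* ≤ a/(2(b-c)), where p*_min = a(N-1)/((N-1)(2b-c) + c). Define ρ* = (2b-c)(p* - p_NE)/(c·p*) with p_NE = a/(2b-c). Then ρ* ∈ [-1/(N-1), 1], and with U_i = p* for all i, V_ii = σ², V_ij = ρ*σ² (σ² > 0), the misspecified OLS price of every firm equals p*: ((a + c p*)σ² - c p* ρ* σ²) / (2(bσ² - cρ*σ²)) = p* (assuming b - cρ* > 0). -/

import Mathlib

/-- Cooper-style multiplicity: for any target price `p*` in
`[a(N-1)/((N-1)(2b-c)+c), a/(2(b-c))]`, the correlation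
`ρ* = (2b-c)(p* - p_NE)/(c p*)` lies in `[-1/(N-1), 1]`, and the symmetric
equicorrelated state `(p*, σ², ρ*σ²)` makes every firm's misspecified OLS
price equal to `p*`. -/
theorem cooper_multiplicity_steady_state
    (a b c : ℝ) (ha : 0 < a) (hb : 0 < b) (hc : 0 < c) (hbc : c < b)
    (N : ℕ) (hN : 2 ≤ N) (σ : ℝ) (hσ : 0 < σ) (p : ℝ)
    (hlo : a * ((N : ℝ) - 1) / (((N : ℝ) - 1) * (2 * b - c) + c) ≤ p)
    (hhi : p ≤ a / (2 * (b - c)))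
    (ρ : ℝ) (hρdef : ρ = (2 * b - c) * (p - a / (2 * b - c)) / (c * p))
    (hbranch : 0 < b - c * ρ) :
    (-(1 / ((N : ℝ) - 1)) ≤ ρ ∧ ρ ≤ 1) ∧
    ((a + c * p) * σ ^ 2 - c * p * (ρ * σ ^ 2)) / (2 * (b * σ ^ 2 - c * (ρ * σ ^ 2)))
      = p := by
  have hN1 : (1 : ℝ) ≤ (N : ℝ) - 1 := by
    have : (2 : ℝ) ≤ (N : ℝ) := by exact_mod_cast hN
    linarith
  have h2bc : 0 < 2 * b - c := by linarith
  have hden : 0 < ((N : ℝ) - 1) * (2 * b - c) + c := by nlinarith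
  have hp : 0 < p := by
    have : 0 < a * ((N : ℝ) - 1) / (((N : ℝ) - 1) * (2 * b - c) + c) := by
      apply div_pos (by nlinarith) hden
    linarith
  have hlo' : a * ((N : ℝ) - 1) ≤ p * (((N : ℝ) - 1) * (2 * b - c) + c) := by
    rw [div_le_iff₀ hden] at hlo; linarith
  have hhi' : p * (2 * (b - c)) ≤ a := by
    rw [le_div_iff₀ (by linarith)] at hhi; linarith
  have hρ : ρ = ((2 * b - c) * p - a) / (c * p) := by
    rw [hρdef]; field_simp
  have hcp : 0 < c * p := mul_pos hc hp
  constructor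
  · constructor
    · have hN1' : (0:ℝ) < (N : ℝ) - 1 := by linarith
      rw [hρ, neg_le, ← neg_div, div_le_div_iff₀ hcp hN1']
      nlinarith
    · rw [hρ, div_le_one hcp]; nlinarith
  · have hσ2 : (0:ℝ) < σ ^ 2 := by positivity
    have hρmul : ρ * (c * p) = (2 * b - c) * p - a := by
      rw [hρ, div_mul_cancel₀ _ (ne_of_gt hcp)]
    rw [div_eq_iff (by nlinarith : 2 * (b * σ ^ 2 - c * (ρ * σ ^ 2)) ≠ 0)]
    nlinarith [hρmul]
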